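/- Let W : ℕ → ℕ satisfy W(0)=1, W(1)=2, and W(N+1)=2·W(N)+N·W(N-1). Then W(N) = ∑_{k=0}^{⌊N/2⌋} (N choose 2k) · (2k-1)!! · 2^(N-2k), where (2k-1)!! = (2k)!/(2^k · k!) is the number of perfect matchings on 2k elements. -/

import Mathlib

open Finset

private def df : ℕ → ℕ
  | 0 => 1
  | k+1 => (2*k+1) * df k

private lemma df_mul (k : ℕ) : df k * (2^k * k.factorial) = (2*k).factorial := by
  induction k with
  | zero => simp [df]
  | succ k ih =>
    have h : (2*(k+1)).factorial = (2*k+2) * ((2*k+1) * (2*k).factorial) := by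
      rw [show 2*(k+1) = (2*k+1)+1 by ring, Nat.factorial_succ,
        show 2*k+1 = (2*k)+1 from rfl, Nat.factorial_succ]
    rw [h, ← ih, df, Nat.factorial_succ, pow_succ]
    ring

private lemma df_div (k : ℕ) : (2*k).factorial / (2^k * k.factorial) = df k := by
  rw [← df_mul]
  exact Nat.mul_div_cancel _ (Nat.mul_pos (pow_pos (by norm_num) _) k.factorial_pos)

private def S (n : ℕ) : ℕ :=
  ∑ k ∈ Finset.range (n/2 + 1), Nat.choose n (2*k) * df k * 2 ^ (n - 2*k)

private lemma S_zero : S 0 = 1 := by simp [S, df]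

private lemma S_one : S 1 = 2 := by simp [S, df]

private lemma key (m : ℕ) : S (m+2) = 2 * S (m+1) + (m+1) * S m := by
  have hdiv : (m+2)/2 = m/2 + 1 := by omega
  have h2S : 2 * S (m+1) = ∑ k ∈ Finset.range (m/2 + 2),
      Nat.choose (m+1) (2*k) * df k * 2 ^ (m+2 - 2*k) := by
    rw [S, Finset.mul_sum]
    rw [Finset.sum_subset (Finset.range_subset_range.2 (by omega : (m+1)/2 + 1 ≤ m/2 + 2))]
    · apply Finset.sum_congr rfl
      intro k hk
      simp only [Finset.mem_range] at hk
      have hle : 2*k ≤ m+1 ∨ m+1 < 2*k := by omega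
      rcases hle with hle | hlt
      · have : m+2 - 2*k = (m+1 - 2*k) + 1 := by omega
        rw [this, pow_succ]
        ring
      · rw [Nat.choose_eq_zero_of_lt hlt]
        ring
    · intro k hk hnk
      simp only [Finset.mem_range] at hk hnk
      have : m+1 < 2*k := by omega
      rw [Nat.choose_eq_zero_of_lt this]
      ring
  rw [Finset.sum_range_succ'] at h2S
  rw [h2S]
  rw [S, hdiv, Finset.sum_range_succ']
  rw [S, Finset.mul_sum, add_right_comm, ← Finset.sum_add_distrib]
  congr 1
  apply Finset.sum_congr rfl
  intro j hj
  simp only [Finset.mem_range] at hj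
  have h2j : 2*j ≤ m := by omega
  have he1 : m+2 - 2*(j+1) = m - 2*j := by omega
  rw [he1]
  rw [show 2*(j+1) = (2*j+1)+1 by ring, Nat.choose_succ_succ (m+1) (2*j+1)]
  have hp : (m+1) * Nat.choose m (2*j) = Nat.choose (m+1) (2*j+1) * (2*j+1) := by
    simpa using Nat.add_one_mul_choose_eq m (2*j)
  show (Nat.choose (m+1) (2*j+1) + Nat.choose (m+1) (2*j+1+1)) * df (j+1) * 2^(m-2*j)
      = Nat.choose (m+1) (2*j+1+1) * df (j+1) * 2^(m-2*j)
        + (m+1) * (Nat.choose m (2*j) * df j * 2^(m-2*j))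
  rw [df, show (m+1) * (Nat.choose m (2*j) * df j * 2^(m-2*j))
      = ((m+1) * Nat.choose m (2*j)) * (df j * 2^(m-2*j)) by ring, hp]
  ring

theorem magnetic_coin_closed_form (W : ℕ → ℕ)
    (h0 : W 0 = 1) (h1 : W 1 = 2)
    (hrec : ∀ N : ℕ, 1 ≤ N → W (N + 1) = 2 * W N + N * W (N - 1)) :
    ∀ N : ℕ, W N = ∑ k ∈ Finset.range (N / 2 + 1),
      Nat.choose N (2 * k) * ((2 * k).factorial / (2 ^ k * k.factorial)) * 2 ^ (N - 2 * k) := by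
  have hWS : ∀ N : ℕ, W N = S N := by
    have main : ∀ N : ℕ, W N = S N ∧ W (N+1) = S (N+1) := by
      intro N
      induction N with
      | zero => exact ⟨by rw [h0, S_zero], by rw [h1, S_one]⟩
      | succ n ih =>
        refine ⟨ih.2, ?_⟩
        have := hrec (n+1) (by omega)
        simp only [Nat.add_sub_cancel] at this
        rw [this, key, ih.1, ih.2]
    exact fun N => (main N).1
  intro N
  rw [hWS N, S]
  apply Finset.sum_congr rfl
  intro k _
  rw [df_div]
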